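/- Let v_1,...,v_n ∈ ℤ^n be primitive linearly independent vectors, and let w_1,...,w_n ∈ ℤ^n be the primitive generators of the rays of the dual cone Cone(v_1,...,v_n)^∨, labeled so that ⟨w_i, v_j⟩ = 0 for i ≠ j. Then for each i, ⟨v_i, w_i⟩ = mult(v_1,...,v_n) / mult(v_1,...,v̂_i,...,v_n), where mult denotes the index of the subgroup generated by the given vectors inside the lattice obtained by intersecting ℤ^n with their real span. -/

import Mathlib

open Finset

noncomputable section

/-- Cast an integer vector to a real vector. -/
def castZ {n : ℕ} (u : Fin n → ℤ) : Fin n → ℝ := fun j => (u j : ℝ)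

/-- Membership in the cone spanned by the vectors `w`. -/
def inCone {n m : ℕ} (w : Fin m → (Fin n → ℝ)) (x : Fin n → ℝ) : Prop :=
  ∃ a : Fin m → ℝ, (∀ i, 0 ≤ a i) ∧ x = ∑ i, a i • w i

/-- The set of total weights of nonnegative representations of `x` in terms of `w`. -/
def weightSet {n m : ℕ} (w : Fin m → (Fin n → ℝ)) (x : Fin n → ℝ) : Set ℝ :=
  { t | ∃ a : Fin m → ℝ, (∀ i, 0 ≤ a i) ∧ x = ∑ i, a i • w i ∧ t = ∑ i, a i }

/-- The maximum weight function `W`. -/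
def maxWeight {n m : ℕ} (w : Fin m → (Fin n → ℝ)) (x : Fin n → ℝ) : ℝ :=
  sSup (weightSet w x)

/-- A lattice vector is primitive. -/
def Primitive {n : ℕ} (v : Fin n → ℤ) : Prop :=
  v ≠ 0 ∧ ∀ (z : ℤ) (q : Fin n → ℤ), 0 < z → v = z • q → z = 1

/-- Lattice points of the cone. -/
def latticeInCone {n m : ℕ} (w : Fin m → (Fin n → ℤ)) (u : Fin n → ℤ) : Prop :=
  inCone (fun i => castZ (w i)) (castZ u)

/-- `χ^u ∈ m_Q^k` : `u` is a sum of `k` nonzero lattice points of the cone plus a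
lattice point of the cone. -/
def inPowM {n m : ℕ} (w : Fin m → (Fin n → ℤ)) (u : Fin n → ℤ) (k : ℕ) : Prop :=
  ∃ v : Fin k → (Fin n → ℤ), (∀ i, latticeInCone w (v i) ∧ v i ≠ 0) ∧
    latticeInCone w (u - ∑ i, v i)

/-- `k_u` : the largest `k` such that `χ^u ∈ m_Q^k`. -/
def kU {n m : ℕ} (w : Fin m → (Fin n → ℤ)) (u : Fin n → ℤ) : ℕ :=
  sSup {k | inPowM w u k}

/-- Lattice points of the fundamental box `S_Q`. -/
def inBox {n m : ℕ} (w : Fin m → (Fin n → ℤ)) (u : Fin n → ℤ) : Prop :=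
  ∃ a : Fin m → ℝ, (∀ i, 0 ≤ a i ∧ a i < 1) ∧ castZ u = ∑ i, a i • castZ (w i)

/-- The constant `Γ_Q`. -/
def gammaQ {n m : ℕ} (w : Fin m → (Fin n → ℤ)) : ℝ :=
  sSup { x | ∃ u, inBox w u ∧
    x = maxWeight (fun i => castZ (w i)) (castZ u) - (kU w u : ℝ) }

end

noncomputable section

/-- The cast `(Fin n → ℤ) →+ (Fin n → ℝ)` as an additive monoid hom. -/
def castHom (n : ℕ) : (Fin n → ℤ) →+ (Fin n → ℝ) :=
  AddMonoidHom.mk' castZ (by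
    intro a b; funext j; simp [castZ])

/-- The subgroup of lattice points lying in the real span of the family `v`. -/
def latticeOfSpan {n : ℕ} {ι : Type*} (v : ι → (Fin n → ℤ)) : AddSubgroup (Fin n → ℤ) :=
  (AddSubgroup.comap (castHom n)
    (Submodule.span ℝ (Set.range fun i => castZ (v i))).toAddSubgroup)

/-- The multiplicity of the family `v`: the index of the subgroup generated by the `v i`
inside the subgroup of lattice points of their real linear span. -/
def multOf {n : ℕ} {ι : Type*} (v : ι → (Fin n → ℤ)) : ℕ :=
  AddSubgroup.relIndex ((Submodule.span ℤ (Set.range v)).toAddSubgroup) (latticeOfSpan v)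

/-- Integer dot product. -/
def dotZ {n : ℕ} (x y : Fin n → ℤ) : ℤ := ∑ j, x j * y j

end

section Aux

open Submodule

lemma primitive_bezout {n : ℕ} {u : Fin n → ℤ} (hu : Primitive u) :
    ∃ c : Fin n → ℤ, ∑ j, c j * u j = 1 := by
  set I : Ideal ℤ := Ideal.span (Set.range u) with hI
  obtain ⟨g, hg⟩ := (IsPrincipalIdealRing.principal I).principal
  have hmem : ∀ j, u j ∈ I := fun j => Ideal.subset_span (Set.mem_range_self j)
  have hdvd : ∀ j, g ∣ u j := by
    intro j
    have := hmem j
    rw [hg, Ideal.submodule_span_eq, Ideal.mem_span_singleton] at this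
    exact this
  have hg0 : g ≠ 0 := by
    rintro rfl
    apply hu.1
    funext j
    simpa using hdvd j
  have habs : |g| = 1 := by
    refine hu.2 |g| (fun j => u j / |g|) (abs_pos.mpr hg0) ?_
    funext j
    have : |g| ∣ u j := (abs_dvd g (u j)).mpr (hdvd j)
    simp [Int.mul_ediv_cancel' this]
  have hunit : IsUnit g := by
    rcases abs_eq (by norm_num : (0:ℤ) ≤ 1) |>.mp habs with h | h
    · exact h ▸ isUnit_one
    · exact h ▸ (isUnit_one.neg)
  have htop : I = ⊤ := by
    rw [hg, Ideal.submodule_span_eq, Ideal.span_singleton_eq_top]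
    exact hunit
  have h1 : (1 : ℤ) ∈ Submodule.span ℤ (Set.range u) := by
    have : (1 : ℤ) ∈ I := by rw [htop]; trivial
    exact this
  rw [mem_span_range_iff_exists_fun] at h1
  obtain ⟨c, hc⟩ := h1
  exact ⟨c, by simpa [smul_eq_mul] using hc⟩

end Aux

theorem dual_ray_pairing_eq_mult_ratio {n : ℕ} (v w : Fin n → (Fin n → ℤ))
    (hvprim : ∀ i, Primitive (v i))
    (hvind : LinearIndependent ℝ (fun i => castZ (v i)))
    (hwprim : ∀ i, Primitive (w i))
    (horth : ∀ i j, i ≠ j → dotZ (w i) (v j) = 0)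
    (hpos : ∀ i, 0 < dotZ (w i) (v i)) :
    ∀ i : Fin n,
      (dotZ (v i) (w i) : ℚ) =
        (multOf v : ℚ) / (multOf (fun j : {j : Fin n // j ≠ i} => v (j : Fin n)) : ℚ) := by
  intro i
  classical
  set d : ℤ := dotZ (w i) (v i) with hd
  have hd0 : d ≠ 0 := (hpos i).ne'
  set vsub : {j : Fin n // j ≠ i} → (Fin n → ℤ) := fun j => v (j : Fin n) with hvsub
  -- the integral functional f = ⟨w i, ·⟩
  set f : (Fin n → ℤ) →+ ℤ := AddMonoidHom.mk' (fun x => dotZ (w i) x)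
    (by intro a b; simp [dotZ, mul_add, Finset.sum_add_distrib]) with hf
  have hfapp : ∀ x, f x = ∑ j, w i j * x j := fun x => rfl
  have hfvi : f (v i) = d := rfl
  have hfvj : ∀ j, j ≠ i → f (v j) = 0 := fun j hj => horth i j hj.symm
  have hfsum : ∀ c : Fin n → ℤ, f (∑ j, c j • v j) = c i * d := by
    intro c
    rw [map_sum]
    rw [Finset.sum_eq_single i]
    · rw [map_zsmul, hfvi]; simp [smul_eq_mul]
    · intro j _ hj
      rw [map_zsmul, hfvj j hj, smul_zero]
    · intro h; exact absurd (Finset.mem_univ i) h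
  -- the real functional φ
  set φ : (Fin n → ℝ) →ₗ[ℝ] ℝ := ∑ j, (w i j : ℝ) • LinearMap.proj j with hφ
  have hφapp : ∀ x : Fin n → ℝ, φ x = ∑ j, (w i j : ℝ) * x j := by
    intro x; simp [hφ, smul_eq_mul]
  have hφcast : ∀ x : Fin n → ℤ, φ (castZ x) = ((f x : ℤ) : ℝ) := by
    intro x
    rw [hφapp, hfapp]
    push_cast [castZ]
    rfl
  have hφne : φ ≠ 0 := by
    intro h
    have : φ (castZ (v i)) = 0 := by rw [h]; rfl
    rw [hφcast, hfvi] at this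
    exact hd0 (by exact_mod_cast this)
  -- real span of the subfamily
  set S : Submodule ℝ (Fin n → ℝ) :=
    Submodule.span ℝ (Set.range fun j : {j : Fin n // j ≠ i} => castZ (vsub j)) with hS
  have hvsubind : LinearIndependent ℝ (fun j : {j : Fin n // j ≠ i} => castZ (vsub j)) :=
    hvind.comp Subtype.val Subtype.val_injective
  have hcard : Fintype.card {j : Fin n // j ≠ i} = n - 1 := by
    have h := Fintype.card_subtype_compl (fun j : Fin n => j = i)
    rw [Fintype.card_subtype_eq, Fintype.card_fin] at h
    exact h
  have hfinrankS : Module.finrank ℝ S = n - 1 := by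
    rw [hS, finrank_span_eq_card hvsubind, hcard]
  have hfinrankKer : Module.finrank ℝ (LinearMap.ker φ) = n - 1 := by
    have h1 := Module.Dual.finrank_ker_add_one_of_ne_zero hφne
    have h2 : Module.finrank ℝ (Fin n → ℝ) = n := by
      rw [Module.finrank_pi, Fintype.card_fin]
    omega
  have hSle : S ≤ LinearMap.ker φ := by
    rw [hS, Submodule.span_le]
    rintro _ ⟨j, rfl⟩
    rw [SetLike.mem_coe, LinearMap.mem_ker, hφcast]
    rw [show f (vsub j) = 0 from hfvj (j : Fin n) j.2]
    exact Int.cast_zero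
  have hSker : S = LinearMap.ker φ :=
    Submodule.eq_of_le_of_finrank_eq hSle (by rw [hfinrankS, hfinrankKer])
  -- lattice of span of subfamily = kernel of f
  have hker : latticeOfSpan vsub = f.ker := by
    ext x
    rw [latticeOfSpan, AddSubgroup.mem_comap, Submodule.mem_toAddSubgroup]
    rw [show (castHom n) x = castZ x from rfl]
    rw [show Submodule.span ℝ (Set.range fun j => castZ (vsub j)) = S from rfl]
    rw [hSker, LinearMap.mem_ker, hφcast, AddMonoidHom.mem_ker]
    exact_mod_cast Iff.rfl
  -- subgroups
  set M : AddSubgroup (Fin n → ℤ) := (Submodule.span ℤ (Set.range v)).toAddSubgroup with hM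
  set M' : AddSubgroup (Fin n → ℤ) :=
    (Submodule.span ℤ (Set.range vsub)).toAddSubgroup with hM'
  have hMinf : M ⊓ f.ker = M' := by
    ext x
    constructor
    · intro hx
      obtain ⟨hxM, hxk⟩ := AddSubgroup.mem_inf.mp hx
      have hxM' : x ∈ Submodule.span ℤ (Set.range v) := hxM
      rw [Submodule.mem_span_range_iff_exists_fun] at hxM'
      obtain ⟨c, hc⟩ := hxM'
      have hfx : f x = 0 := hxk
      rw [← hc, hfsum] at hfx
      have hci : c i = 0 := by
        rcases mul_eq_zero.mp hfx with h | h
        · exact h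
        · exact absurd h hd0
      show x ∈ Submodule.span ℤ (Set.range vsub)
      rw [← hc]
      refine Submodule.sum_mem _ ?_
      intro j _
      by_cases hj : j = i
      · subst hj; rw [hci]; simp
      · exact Submodule.smul_mem _ _ (Submodule.subset_span ⟨⟨j, hj⟩, rfl⟩)
    · intro hx
      have hx' : x ∈ Submodule.span ℤ (Set.range vsub) := hx
      constructor
      · show x ∈ Submodule.span ℤ (Set.range v)
        refine Submodule.span_mono ?_ hx'
        rintro _ ⟨j, rfl⟩
        exact ⟨(j : Fin n), rfl⟩
      · show f x = 0
        refine Submodule.span_induction ?_ (map_zero f) (fun a b _ _ ha hb => by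
          rw [map_add, ha, hb, add_zero]) (fun z a _ ha => by
          rw [map_zsmul, ha, smul_zero]) hx'
        rintro _ ⟨j, rfl⟩
        exact hfvj (j : Fin n) j.2
  have hmap : AddSubgroup.map f M = AddSubgroup.zmultiples d := by
    ext m
    constructor
    · rintro ⟨x, hx, rfl⟩
      have hx' : x ∈ Submodule.span ℤ (Set.range v) := hx
      rw [Submodule.mem_span_range_iff_exists_fun] at hx'
      obtain ⟨c, hc⟩ := hx'
      rw [← hc, hfsum]
      exact ⟨c i, by simp [smul_eq_mul]⟩
    · rintro ⟨k, rfl⟩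
      refine ⟨k • v i, ?_, ?_⟩
      · exact AddSubgroup.zsmul_mem M (Submodule.subset_span ⟨i, rfl⟩) k
      · rw [map_zsmul, hfvi]
  -- surjectivity of f
  have hsurj : Function.Surjective f := by
    obtain ⟨c, hc⟩ := primitive_bezout (hwprim i)
    intro m
    refine ⟨m • c, ?_⟩
    rw [map_zsmul]
    have : f c = 1 := by
      rw [hfapp]
      rw [Finset.sum_congr rfl fun j _ => mul_comm (w i j) (c j)]
      exact hc
    rw [this, smul_eq_mul, mul_one]
  -- index computations
  have eq1 : (M ⊔ f.ker).index = d.natAbs := by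
    have h := AddSubgroup.index_map M f
    rw [hmap, Int.index_zmultiples, AddMonoidHom.range_eq_top_of_surjective f hsurj,
      AddSubgroup.index_top, mul_one] at h
    exact h.symm
  have eq2 : M.relIndex (M ⊔ f.ker) * (M ⊔ f.ker).index = M.index := by
    have h := AddSubgroup.relIndex_mul_relIndex M (M ⊔ f.ker) ⊤ le_sup_left le_top
    rwa [AddSubgroup.relIndex_top_right, AddSubgroup.relIndex_top_right] at h
  have eq3 : M.relIndex (M ⊔ f.ker) = multOf vsub := by
    rw [sup_comm, AddSubgroup.relIndex_sup_right, ← AddSubgroup.inf_relIndex_right, hMinf]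
    rw [multOf, hker]
  have hlat_top : latticeOfSpan v = ⊤ := by
    have hspan : Submodule.span ℝ (Set.range fun j => castZ (v j)) = ⊤ := by
      apply hvind.span_eq_top_of_card_eq_finrank'
      rw [Fintype.card_fin, Module.finrank_pi, Fintype.card_fin]
    rw [latticeOfSpan, hspan]
    rfl
  have hmv : multOf v = M.index := by
    rw [multOf, hlat_top, AddSubgroup.relIndex_top_right]
  have hmain : multOf v = multOf vsub * d.natAbs := by
    rw [hmv, ← eq2, eq3, eq1]
  -- nonvanishing of the index via Cramer's rule
  set A : Matrix (Fin n) (Fin n) ℤ := Matrix.of fun r c => v c r with hA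
  set D : ℤ := A.det with hD
  have hDne : D ≠ 0 := by
    intro h
    set B : Matrix (Fin n) (Fin n) ℝ := A.map (Int.cast) with hB
    have hBdet : B.det = (D : ℝ) := by
      rw [show B = (Int.castRingHom ℝ).mapMatrix A from rfl, ← RingHom.map_det]
      rfl
    have hcols : LinearIndependent ℝ (fun j => Matrix.transpose B j) := hvind
    have hunit : IsUnit B := Matrix.linearIndependent_cols_iff_isUnit.mp hcols
    have : B.det ≠ 0 := (Matrix.isUnit_iff_isUnit_det B).mp hunit |>.ne_zero
    rw [hBdet, h] at this
    exact this (by norm_num)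
  have hCramer : ∀ x : Fin n → ℤ, D • x ∈ Submodule.span ℤ (Set.range v) := by
    intro x
    have h := Matrix.mulVec_cramer A x
    have h2 : A.mulVec (Matrix.cramer A x) = ∑ j, (Matrix.cramer A x) j • v j := by
      funext r
      rw [Matrix.mulVec, dotProduct]
      rw [Finset.sum_apply]
      exact Finset.sum_congr rfl fun j _ => by
        simp [hA, mul_comm, Matrix.of_apply]
    rw [h2] at h
    rw [← hD] at h
    rw [← h]
    exact Submodule.sum_mem _ fun j _ =>
      Submodule.smul_mem _ _ (Submodule.subset_span ⟨j, rfl⟩)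
  have hMne : M.index ≠ 0 := by
    haveI : NeZero D.natAbs := ⟨Int.natAbs_ne_zero.mpr hDne⟩
    set ρ : (Fin n → ℤ) →+ (Fin n → ZMod D.natAbs) :=
      AddMonoidHom.mk' (fun x j => ((x j : ℤ) : ZMod D.natAbs))
        (by intro a b; funext j; simp [Pi.add_apply]) with hρ
    have hρker : ρ.ker ≤ M := by
      intro x hx
      have hx' : ∀ j, ((x j : ℤ) : ZMod D.natAbs) = 0 := fun j => congrFun hx j
      have hdvd : ∀ j, D ∣ x j := by
        intro j
        have := (ZMod.intCast_zmod_eq_zero_iff_dvd (x j) D.natAbs).mp (hx' j)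
        exact (Int.natAbs_dvd).mp this
      have : x = D • (fun j => x j / D) := by
        funext j
        simp [Int.mul_ediv_cancel' (hdvd j)]
      rw [this]
      exact hCramer _
    haveI : Finite ((Fin n → ℤ) ⧸ ρ.ker) :=
      Finite.of_equiv _ (QuotientAddGroup.quotientKerEquivRange ρ).toEquiv.symm
    have hρne : ρ.ker.index ≠ 0 := AddSubgroup.index_ne_zero_of_finite
    intro h
    have hdvd2 := AddSubgroup.index_dvd_of_le hρker
    rw [h] at hdvd2
    exact hρne (zero_dvd_iff.mp hdvd2)
  have hvne : multOf v ≠ 0 := by rw [hmv]; exact hMne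
  have hsubne : multOf vsub ≠ 0 := by
    intro h
    rw [hmain, h, zero_mul] at hvne
    exact hvne rfl
  have hdot : dotZ (v i) (w i) = d := by
    rw [hd, dotZ, dotZ]
    exact Finset.sum_congr rfl fun j _ => mul_comm _ _
  rw [hdot, hmain]
  have hnat : ((d.natAbs : ℕ) : ℚ) = (d : ℚ) := by
    rw [Nat.cast_natAbs, hd, abs_of_pos (hpos i)]
  push_cast
  rw [hnat]
  rw [mul_comm, mul_div_assoc, div_self (by exact_mod_cast hsubne), mul_one]
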